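/- Let g : ℝ → ℂ be a continuous function with g(0) = 1 and g(x)·g(-x) = 1 for all x, and suppose there is a function G on the closed parabolic region {3s ≥ t²} with g(x)·g(y)·g(z) = G(x²+y²+z², x+y+z) for all x, y, z ∈ ℝ. Then g satisfies g(x)·g(y) = g(x+y) for all x, y ∈ ℝ. -/
import Mathlib


theorem odd_part_cauchy
    (g : ℝ → ℂ) (hg : Continuous g) (hg0 : g 0 = 1)
    (hodd : ∀ x : ℝ, g x * g (-x) = 1)
    (hG : ∃ G : ℝ × ℝ → ℂ, ∀ x y z : ℝ,
      g x * g y * g z = G (x^2 + y^2 + z^2, x + y + z)) :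
    ∀ x y : ℝ, g x * g y = g (x + y) := by
  obtain ⟨G, hGe⟩ := hG
  intro x y
  have hs : (0:ℝ) ≤ x^2 + x*y + y^2 := by nlinarith [sq_nonneg (x+y)]
  have hsq : Real.sqrt (x^2 + x*y + y^2) ^ 2 = x^2 + x*y + y^2 := Real.sq_sqrt hs
  have h1 := hGe x y (-(x+y))
  have h2 := hGe (Real.sqrt (x^2 + x*y + y^2)) (-(Real.sqrt (x^2 + x*y + y^2))) 0
  have hp : (x^2 + y^2 + (-(x+y))^2, x + y + (-(x+y)))
      = ((Real.sqrt (x^2 + x*y + y^2))^2 + (-(Real.sqrt (x^2 + x*y + y^2)))^2 + 0^2,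
        Real.sqrt (x^2 + x*y + y^2) + (-(Real.sqrt (x^2 + x*y + y^2))) + 0) := by
    refine Prod.ext ?_ (by ring)
    simp only
    nlinarith [hsq]
  have key : g x * g y * g (-(x+y)) = 1 := by
    rw [h1, hp, ← h2, hodd, hg0, one_mul]
  have h3 := hodd (x+y)
  calc g x * g y = g x * g y * g (-(x+y)) * g (x+y) := by
        rw [mul_assoc, mul_comm (g (-(x+y))), h3, mul_one]
    _ = g (x+y) := by rw [key, one_mul]
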